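/- arXiv:1401.6415 — 3 statements merged into one kernel-verified Lean document; each statement's English description precedes it below -/
import Mathlib

section
/- Let f ≥ 0 be integrable on [0,t] for each 0 < t < 1 and set d(t) = t + e − e·t. Then for all 0 < t < 1, ∫₀^{t/d(t)} f(x) dx ≤ ∫₀^t (1/(1−x))·(1/x)∫₀^x f(s) ds dx. -/
open MeasureTheory Set
open scoped ENNReal

/-- Lemma 3: for `f ≥ 0` integrable on `[0,t]` for each `0 < t < 1` and
`d(t) = t + e - e·t`, one has
`∫₀^{t/d(t)} f ≤ ∫₀^t (1/(1-x))·(1/x)∫₀^x f(s) ds dx` for all `0 < t < 1`. -/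
theorem stmt_2 (f : ℝ → ℝ) (hf : ∀ t, 0 ≤ f t)
    (hloc : ∀ t : ℝ, 0 < t → t < 1 → IntegrableOn f (Ioc 0 t))
    (t : ℝ) (ht0 : 0 < t) (ht1 : t < 1) :
    ENNReal.ofReal (∫ x in Ioc 0 (t / (t + Real.exp 1 - Real.exp 1 * t)), f x) ≤
      ∫⁻ x in Ioc 0 t,
        ENNReal.ofReal ((1 / (1 - x)) * ((1 / x) * ∫ s in Ioc 0 x, f s)) := by
  have he1 : (1:ℝ) < Real.exp 1 := by
    have := Real.add_one_le_exp (1:ℝ); linarith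
  set d : ℝ := t + Real.exp 1 - Real.exp 1 * t with hd
  have hd1 : 1 < d := by nlinarith [mul_pos (sub_pos.2 he1) (sub_pos.2 ht1)]
  have hd0 : 0 < d := lt_trans one_pos hd1
  set c : ℝ := t / d with hc
  have hc0 : 0 < c := div_pos ht0 hd0
  have hct : c < t := div_lt_self ht0 hd1
  have hc1 : c < 1 := hct.trans ht1
  -- measurable representative of f on Ioc 0 t
  have hint : IntegrableOn f (Ioc 0 t) := hloc t ht0 ht1
  obtain ⟨f₀, hf₀m, hff₀⟩ := hint.aestronglyMeasurable.aemeasurable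
  have key : ∀ u : Set ℝ, MeasurableSet u → u ⊆ Ioc 0 t →
      f =ᵐ[volume.restrict u] f₀ := by
    intro u hu hsub
    have hru : volume.restrict u = (volume.restrict (Ioc 0 t)).restrict u := by
      rw [Measure.restrict_restrict hu, inter_eq_self_of_subset_left hsub]
    rw [hru]
    exact hff₀.filter_mono (ae_mono Measure.restrict_le_self)
  set h : ℝ → ℝ≥0∞ := fun s => ENNReal.ofReal (f₀ s) with hhdef
  have hh : Measurable h := hf₀m.ennreal_ofReal
  set g : ℝ → ℝ≥0∞ := fun x => ENNReal.ofReal (1/(1-x)) * ENNReal.ofReal (1/x) with hgdef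
  have hg : Measurable g :=
    ((measurable_const.div (measurable_const.sub measurable_id)).ennreal_ofReal).mul
      ((measurable_const.div measurable_id).ennreal_ofReal)
  -- inner integral identity
  have inner_eq : ∀ x : ℝ, 0 < x → x ≤ t →
      ENNReal.ofReal (∫ s in Ioc 0 x, f s) = ∫⁻ s in Ioc 0 x, h s := by
    intro x hx0 hxt
    have hsub : Ioc 0 x ⊆ Ioc 0 t := Ioc_subset_Ioc_right hxt
    have haeq := key _ measurableSet_Ioc hsub
    have hint' : IntegrableOn f (Ioc 0 x) := hint.mono_set hsub
    have hint₀ : IntegrableOn f₀ (Ioc 0 x) := hint'.congr haeq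
    have hnn : 0 ≤ᵐ[volume.restrict (Ioc 0 x)] f₀ :=
      haeq.mono fun s hs => (hf s).trans_eq hs
    rw [integral_congr_ae haeq]
    exact ofReal_integral_eq_lintegral_ofReal hint₀ hnn
  set I : ℝ → ℝ≥0∞ := fun s => ∫⁻ x in Ioc s t, g x with hIdef
  have hIanti : Antitone I := fun a b hab => lintegral_mono_set (Ioc_subset_Ioc_left hab)
  have hImeas : Measurable I := hIanti.measurable
  -- kernel lower bound
  have hker : ∀ s : ℝ, 0 < s → s ≤ c → 1 ≤ I s := by
    intro s hs0 hsc
    have hst : s < t := lt_of_le_of_lt hsc hct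
    have hs1 : s < 1 := hst.trans ht1
    have h1t : 0 < 1 - t := by linarith
    have h1s : 0 < 1 - s := by linarith
    set w : ℝ → ℝ := fun x => 1/(1-x) * (1/x) with hwdef
    have hwc : ContinuousOn w (Icc s t) := by
      apply ContinuousOn.mul
      · exact continuousOn_const.div (continuousOn_const.sub continuousOn_id)
          fun x hx => sub_ne_zero.2 (lt_of_le_of_lt hx.2 ht1).ne'
      · exact continuousOn_const.div continuousOn_id
          fun x hx => (lt_of_lt_of_le hs0 hx.1).ne'
    have hwint : IntegrableOn w (Ioc s t) :=
      (hwc.integrableOn_Icc).mono_set Ioc_subset_Icc_self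
    have hwnn : 0 ≤ᵐ[volume.restrict (Ioc s t)] w := by
      refine (ae_restrict_iff' measurableSet_Ioc).2 (ae_of_all _ fun x hx => ?_)
      have hx0 : 0 < x := lt_trans hs0 hx.1
      have hx1 : x < 1 := lt_of_le_of_lt hx.2 ht1
      exact le_of_lt (mul_pos (div_pos one_pos (by linarith)) (div_pos one_pos hx0))
    have hderiv : ∀ x ∈ uIcc s t,
        HasDerivAt (fun y => Real.log y - Real.log (1 - y)) (w x) x := by
      intro x hx
      rw [uIcc_of_le hst.le] at hx
      have hx0 : 0 < x := lt_of_lt_of_le hs0 hx.1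
      have hx1 : x < 1 := lt_of_le_of_lt hx.2 ht1
      have h1 : HasDerivAt Real.log x⁻¹ x := Real.hasDerivAt_log hx0.ne'
      have h2 : HasDerivAt (fun y : ℝ => 1 - y) (-1) x := by
        simpa using (hasDerivAt_id x).const_sub 1
      have h3 : HasDerivAt (fun y => Real.log (1 - y)) (-1 / (1 - x)) x :=
        h2.log (by linarith)
      have h4 := h1.sub h3
      have hne : (1:ℝ) - x ≠ 0 := ne_of_gt (by linarith)
      refine h4.congr_deriv ?_
      simp only [hwdef]
      field_simp
      ring
    have hii : IntervalIntegrable w volume s t := by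
      apply ContinuousOn.intervalIntegrable
      rwa [uIcc_of_le hst.le]
    have hreal : ∫ x in Ioc s t, w x =
        (Real.log t - Real.log (1 - t)) - (Real.log s - Real.log (1 - s)) := by
      rw [← intervalIntegral.integral_of_le hst.le]
      exact intervalIntegral.integral_eq_sub_of_hasDerivAt hderiv hii
    have hsd : s * d ≤ t := (le_div_iff₀ hd0).1 hsc
    have hsd' : s * d = s*t + s*Real.exp 1 - s*(Real.exp 1 * t) := by rw [hd]; ring
    have hr : 0 < t * (1 - s) / ((1 - t) * s) :=
      div_pos (mul_pos ht0 h1s) (mul_pos h1t hs0)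
    have hexp : Real.exp 1 ≤ t * (1 - s) / ((1 - t) * s) := by
      rw [le_div_iff₀ (mul_pos h1t hs0)]
      nlinarith [hsd, hsd']
    have h2log : 1 ≤ Real.log (t * (1 - s) / ((1 - t) * s)) :=
      (Real.le_log_iff_exp_le hr).2 hexp
    have h3log : Real.log (t * (1 - s) / ((1 - t) * s)) =
        Real.log t + Real.log (1 - s) - (Real.log (1 - t) + Real.log s) := by
      rw [Real.log_div (mul_pos ht0 h1s).ne' (mul_pos h1t hs0).ne',
        Real.log_mul ht0.ne' h1s.ne', Real.log_mul h1t.ne' hs0.ne']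
    have hlog : 1 ≤ (Real.log t - Real.log (1 - t)) - (Real.log s - Real.log (1 - s)) := by
      rw [h3log] at h2log; linarith
    have hIeq : ENNReal.ofReal (∫ x in Ioc s t, w x) = I s := by
      rw [ofReal_integral_eq_lintegral_ofReal hwint hwnn]
      refine setLIntegral_congr_fun measurableSet_Ioc (fun x hx => ?_)
      have hx1 : x < 1 := lt_of_le_of_lt hx.2 ht1
      rw [hwdef, ENNReal.ofReal_mul (le_of_lt (div_pos one_pos (by linarith)))]
    calc (1 : ℝ≥0∞) = ENNReal.ofReal 1 := ENNReal.ofReal_one.symm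
      _ ≤ ENNReal.ofReal (∫ x in Ioc s t, w x) :=
          ENNReal.ofReal_le_ofReal (hreal ▸ hlog)
      _ = I s := hIeq
  -- main chain, left side
  have main : ENNReal.ofReal (∫ x in Ioc 0 c, f x) ≤ ∫⁻ s in Ioc 0 t, h s * I s := by
    rw [inner_eq c hc0 hct.le]
    calc ∫⁻ s in Ioc 0 c, h s ≤ ∫⁻ s in Ioc 0 c, h s * I s := by
          refine lintegral_mono_ae ((ae_restrict_iff' measurableSet_Ioc).2
            (ae_of_all _ fun s hs => ?_))
          conv_lhs => rw [← mul_one (h s)]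
          exact mul_le_mul_right (hker s hs.1 hs.2) _
      _ ≤ ∫⁻ s in Ioc 0 t, h s * I s := lintegral_mono_set (Ioc_subset_Ioc_right hct.le)
  -- Tonelli
  set K : ℝ → ℝ → ℝ≥0∞ := fun x s => if s < x then g x * h s else 0 with hKdef
  have hKm : Measurable (Function.uncurry K) := by
    apply Measurable.ite (measurableSet_lt measurable_snd measurable_fst)
    · exact (hg.comp measurable_fst).mul (hh.comp measurable_snd)
    · exact measurable_const
  have hxside : ∀ x ∈ Ioc 0 t, ∫⁻ s in Ioc 0 t, K x s = g x * ∫⁻ s in Ioc 0 x, h s := by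
    intro x hx
    have hfe : (fun s => K x s) = (Iio x).indicator (fun s => g x * h s) := by
      funext s
      by_cases hsx : s < x
      · rw [hKdef]; simp [hsx, indicator_of_mem (mem_Iio.2 hsx)]
      · rw [hKdef]; simp [hsx, indicator_of_notMem (fun hm => hsx (mem_Iio.1 hm))]
    rw [hfe, lintegral_indicator measurableSet_Iio,
      Measure.restrict_restrict measurableSet_Iio]
    have hset : Iio x ∩ Ioc 0 t = Ioo 0 x := by
      ext y
      simp only [mem_inter_iff, mem_Iio, mem_Ioc, mem_Ioo]
      constructor
      · rintro ⟨h1, h2, _⟩; exact ⟨h2, h1⟩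
      · rintro ⟨h1, h2⟩; exact ⟨h2, h1, le_of_lt (lt_of_lt_of_le h2 hx.2)⟩
    rw [hset, Measure.restrict_congr_set Ioo_ae_eq_Ioc]
    exact lintegral_const_mul' _ _ (ENNReal.mul_ne_top ENNReal.ofReal_ne_top ENNReal.ofReal_ne_top)
  have hsside : ∀ s ∈ Ioc 0 t, ∫⁻ x in Ioc 0 t, K x s = h s * I s := by
    intro s hs
    have hfe : (fun x => K x s) = (Ioi s).indicator (fun x => g x * h s) := by
      funext x
      by_cases hsx : s < x
      · rw [hKdef]; simp [hsx, indicator_of_mem (mem_Ioi.2 hsx)]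
      · rw [hKdef]; simp [hsx, indicator_of_notMem (fun hm => hsx (mem_Ioi.1 hm))]
    rw [hfe, lintegral_indicator measurableSet_Ioi,
      Measure.restrict_restrict measurableSet_Ioi]
    have hset : Ioi s ∩ Ioc 0 t = Ioc s t := by
      ext y
      simp only [mem_inter_iff, mem_Ioi, mem_Ioc]
      constructor
      · rintro ⟨h1, _, h3⟩; exact ⟨h1, h3⟩
      · rintro ⟨h1, h2⟩; exact ⟨h1, lt_trans hs.1 h1, h2⟩
    rw [hset, hIdef]
    rw [show ∫⁻ x in Ioc s t, g x * h s = (∫⁻ x in Ioc s t, g x) * h s from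
      lintegral_mul_const' _ _ ENNReal.ofReal_ne_top, mul_comm]
  have step1 : ∫⁻ x in Ioc 0 t,
      ENNReal.ofReal ((1 / (1 - x)) * ((1 / x) * ∫ s in Ioc 0 x, f s))
      = ∫⁻ x in Ioc 0 t, g x * ∫⁻ s in Ioc 0 x, h s := by
    refine setLIntegral_congr_fun measurableSet_Ioc (fun x hx => ?_)
    have hx1 : x < 1 := lt_of_le_of_lt hx.2 ht1
    rw [ENNReal.ofReal_mul (le_of_lt (div_pos one_pos (by linarith))),
      ENNReal.ofReal_mul (le_of_lt (div_pos one_pos hx.1)),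
      inner_eq x hx.1 hx.2, hgdef, mul_assoc]
  calc ENNReal.ofReal (∫ x in Ioc 0 c, f x) ≤ ∫⁻ s in Ioc 0 t, h s * I s := main
    _ = ∫⁻ s in Ioc 0 t, ∫⁻ x in Ioc 0 t, K x s :=
        (setLIntegral_congr_fun measurableSet_Ioc (fun s hs =>
          (hsside s hs).symm))
    _ = ∫⁻ x in Ioc 0 t, ∫⁻ s in Ioc 0 t, K x s :=
        (lintegral_lintegral_swap hKm.aemeasurable).symm
    _ = ∫⁻ x in Ioc 0 t, g x * ∫⁻ s in Ioc 0 x, h s :=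
        setLIntegral_congr_fun measurableSet_Ioc hxside
    _ = ∫⁻ x in Ioc 0 t,
        ENNReal.ofReal ((1 / (1 - x)) * ((1 / x) * ∫ s in Ioc 0 x, f s)) := step1.symm
end

section
/- Let σ(t) = t/(t + e − e·t) and define T h(t) = h(σ(t)) for measurable h on [0,1]. Then for every integrable h ≥ 0, ∫₀¹ h(σ(x))/(1−x) dx ≤ e·∫₀¹ h(u)/(1−u) du. -/
open MeasureTheory Set

noncomputable def phiAux (u : ℝ) : ℝ := Real.exp 1 * u / (1 - u + Real.exp 1 * u)

lemma one_lt_e : (1:ℝ) < Real.exp 1 := by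
  have := Real.exp_one_gt_d9; linarith

lemma EAux_pos {u : ℝ} (h0 : 0 ≤ u) : 0 < 1 - u + Real.exp 1 * u := by
  nlinarith [one_lt_e]

lemma phiAux_hasDeriv {u : ℝ} (h0 : 0 ≤ u) :
    HasDerivAt phiAux (Real.exp 1 / (1 - u + Real.exp 1 * u) ^ 2) u := by
  have hE := EAux_pos h0
  have h1 : HasDerivAt (fun u : ℝ => Real.exp 1 * u) (Real.exp 1) u := by
    simpa using (hasDerivAt_id u).const_mul (Real.exp 1)
  have h2 : HasDerivAt (fun u : ℝ => 1 - u + Real.exp 1 * u)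
      (-1 + Real.exp 1) u := by
    have := ((hasDerivAt_id u).const_sub 1).add ((hasDerivAt_id u).const_mul (Real.exp 1))
    exact this.congr_deriv (by ring)
  have := h1.div h2 hE.ne'
  exact this.congr_deriv (by field_simp; ring)

lemma phiAux_image : phiAux '' Ioo 0 1 = Ioo (0:ℝ) 1 := by
  have he := one_lt_e
  ext x
  constructor
  · rintro ⟨u, ⟨hu0, hu1⟩, rfl⟩
    have hE := EAux_pos hu0.le
    unfold phiAux
    refine ⟨div_pos (by nlinarith) hE, ?_⟩
    rw [div_lt_one hE]; nlinarith
  · rintro ⟨hx0, hx1⟩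
    have hD : 0 < x + Real.exp 1 - Real.exp 1 * x := by nlinarith
    have hs : 0 < x / (x + Real.exp 1 - Real.exp 1 * x) := div_pos hx0 hD
    refine ⟨x / (x + Real.exp 1 - Real.exp 1 * x), ⟨hs, ?_⟩, ?_⟩
    · rw [div_lt_one hD]; nlinarith
    · unfold phiAux
      have hden : (0:ℝ) < 1 - x / (x + Real.exp 1 - Real.exp 1 * x) +
          Real.exp 1 * (x / (x + Real.exp 1 - Real.exp 1 * x)) := by nlinarith
      rw [div_eq_iff hden.ne']
      field_simp
      ring

lemma phiAux_injOn : InjOn phiAux (Ioo 0 1) := by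
  rintro u ⟨hu0, hu1⟩ v ⟨hv0, hv1⟩ huv
  have hEu := EAux_pos hu0.le
  have hEv := EAux_pos hv0.le
  unfold phiAux at huv
  rw [div_eq_div_iff hEu.ne' hEv.ne'] at huv
  have h3 : Real.exp 1 * u = Real.exp 1 * v := by linear_combination huv
  exact mul_left_cancel₀ (Real.exp_ne_zero 1) h3

lemma lintegral_image_eq_lintegral_abs_deriv_mul' {s : Set ℝ} {f : ℝ → ℝ} {f' : ℝ → ℝ}
    (hs : MeasurableSet s) (hf' : ∀ x ∈ s, HasDerivWithinAt f (f' x) s x)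
    (hf : InjOn f s) (g : ℝ → ENNReal) :
    ∫⁻ x in f '' s, g x = ∫⁻ x in s, ENNReal.ofReal |f' x| * g (f x) := by
  simpa only [ContinuousLinearMap.det_toSpanSingleton] using
    lintegral_image_eq_lintegral_abs_det_fderiv_mul volume hs
      (fun x hx => (hf' x hx).hasFDerivWithinAt) hf g

/-- The composition operator `Th = h ∘ σ`, `σ(t) = t/(t + e - e·t)`, is bounded with
norm at most `e` on `L¹(1/(1-x))` on `[0,1]`: for every integrable `h ≥ 0`,
`∫₀¹ h(σ(x))/(1-x) dx ≤ e·∫₀¹ h(u)/(1-u) du`. -/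
theorem stmt_6 (h : ℝ → ℝ) (hh : ∀ x, 0 ≤ h x)
    (hint : IntegrableOn h (Icc 0 1)) :
    ∫⁻ x in Ioo (0:ℝ) 1,
        ENNReal.ofReal (h (x / (x + Real.exp 1 - Real.exp 1 * x)) / (1 - x)) ≤
      ENNReal.ofReal (Real.exp 1) *
        ∫⁻ u in Ioo (0:ℝ) 1, ENNReal.ofReal (h u / (1 - u)) := by
  have he := one_lt_e
  have hene := Real.exp_ne_zero 1
  conv_lhs => rw [show Ioo (0:ℝ) 1 = phiAux '' Ioo 0 1 from phiAux_image.symm]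
  rw [lintegral_image_eq_lintegral_abs_deriv_mul' measurableSet_Ioo
      (fun u hu => (phiAux_hasDeriv hu.1.le).hasDerivWithinAt) phiAux_injOn]
  rw [← lintegral_const_mul' _ _ ENNReal.ofReal_ne_top]
  refine setLIntegral_mono' measurableSet_Ioo fun u hu => ?_
  obtain ⟨hu0, hu1⟩ := hu
  have hE := EAux_pos hu0.le
  have hE1 : 1 ≤ 1 - u + Real.exp 1 * u := by nlinarith
  have h1u : (0:ℝ) < 1 - u := by linarith
  have hden : phiAux u + Real.exp 1 - Real.exp 1 * phiAux u =
      Real.exp 1 / (1 - u + Real.exp 1 * u) := by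
    unfold phiAux; field_simp; ring
  have hσφ : phiAux u / (phiAux u + Real.exp 1 - Real.exp 1 * phiAux u) = u := by
    rw [hden]; unfold phiAux; field_simp
  have h1φ : 1 - phiAux u = (1 - u) / (1 - u + Real.exp 1 * u) := by
    unfold phiAux; field_simp; ring
  rw [hσφ, h1φ, abs_of_nonneg (by positivity : (0:ℝ) ≤ Real.exp 1 / (1 - u + Real.exp 1 * u) ^ 2),
    ← ENNReal.ofReal_mul (by positivity), ← ENNReal.ofReal_mul (Real.exp_pos 1).le]
  apply ENNReal.ofReal_le_ofReal
  have key : Real.exp 1 / (1 - u + Real.exp 1 * u) ^ 2 *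
      (h u / ((1 - u) / (1 - u + Real.exp 1 * u))) =
      Real.exp 1 * (h u / (1 - u)) / (1 - u + Real.exp 1 * u) := by
    field_simp
  rw [key]
  exact div_le_self (mul_nonneg (Real.exp_pos 1).le (div_nonneg (hh u) h1u.le)) hE1
end

section
/- Let α < 0 and f ≥ 0 measurable on [0,1] with ∫₀¹ (1−t) f(t) t^α dt < ∞. Then ∫₀¹ x^{α−1} ∫₀^x f(t) dt dx ≤ (max(1,−α)/(−α)) ∫₀¹ (1−t) f(t) t^α dt. -/
open MeasureTheory Set ENNReal

lemma bernoulli_aux13 {β t : ℝ} (hβ : 0 < β) (ht : 0 < t) (ht1 : t ≤ 1) :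
    1 - t ^ β ≤ max 1 β * (1 - t) := by
  rcases le_total β 1 with h | h
  · have h1 : t ^ (1 : ℝ) ≤ t ^ β := Real.rpow_le_rpow_of_exponent_ge ht ht1 h
    rw [Real.rpow_one] at h1
    have hM : (1 : ℝ) ≤ max 1 β := le_max_left 1 β
    nlinarith
  · have hb : (1 : ℝ) + β * (t - 1) ≤ (1 + (t - 1)) ^ β :=
      one_add_mul_self_le_rpow_one_add (by linarith) h
    have ht' : (1 : ℝ) + (t - 1) = t := by ring
    rw [ht'] at hb
    rw [max_eq_right h]
    nlinarith

lemma key_aux13 {α t : ℝ} (hα : α < 0) (ht : 0 < t) (ht1 : t ≤ 1) :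
    (t ^ α - 1) / (-α) ≤ max 1 (-α) / (-α) * ((1 - t) * t ^ α) := by
  have hβ : (0 : ℝ) < -α := by linarith
  have hpow : (0 : ℝ) < t ^ α := Real.rpow_pos_of_pos ht α
  have h1 : t ^ α - 1 ≤ max 1 (-α) * ((1 - t) * t ^ α) := by
    have hb := bernoulli_aux13 hβ ht ht1
    have h2 : t ^ α * (1 - t ^ (-α)) ≤ t ^ α * (max 1 (-α) * (1 - t)) :=
      mul_le_mul_of_nonneg_left hb hpow.le
    have h3 : t ^ α * t ^ (-α) = 1 := by
      rw [← Real.rpow_add ht]; simp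
    nlinarith
  rw [div_mul_eq_mul_div]
  exact div_le_div_of_nonneg_right h1 hβ.le

lemma ofReal_int_le13 {f : ℝ → ℝ} (s : Set ℝ) (hf : ∀ t, 0 ≤ f t) :
    ENNReal.ofReal (∫ t in s, f t) ≤ ∫⁻ t in s, ENNReal.ofReal (f t) := by
  by_cases hi : Integrable f (volume.restrict s)
  · rw [ofReal_integral_eq_lintegral_ofReal hi (ae_of_all _ hf)]
  · rw [integral_undef hi]; simp

/-- Case `p = 1` of the improved weighted Hardy inequality on `[0,1]`: for `α < 0`
and measurable `f ≥ 0` with `∫₀¹ (1-t) f(t) t^α dt < ∞`,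
`∫₀¹ x^{α-1} ∫₀^x f(t) dt dx ≤ (max(1,-α)/(-α)) ∫₀¹ (1-t) f(t) t^α dt`. -/
theorem stmt_13 (α : ℝ) (hα : α < 0) (f : ℝ → ℝ) (hmeas : Measurable f)
    (hf : ∀ t, 0 ≤ f t)
    (hfin : ∫⁻ t in Ioo (0:ℝ) 1, ENNReal.ofReal ((1 - t) * f t * t ^ α) ≠ ⊤) :
    ∫⁻ x in Ioo (0:ℝ) 1, ENNReal.ofReal (x ^ (α - 1) * ∫ t in Ioc 0 x, f t) ≤
      ENNReal.ofReal (max 1 (-α) / (-α)) *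
        ∫⁻ t in Ioo (0:ℝ) 1, ENNReal.ofReal ((1 - t) * f t * t ^ α) := by
  have hβ : (0 : ℝ) < -α := by linarith
  set g : ℝ → ℝ≥0∞ := fun t => ENNReal.ofReal (f t) with hg
  set w : ℝ → ℝ≥0∞ := fun x => ENNReal.ofReal (x ^ (α - 1)) with hw
  have hgmeas : Measurable g := (hmeas.ennreal_ofReal)
  have hwmeas : Measurable w := by
    apply Measurable.ennreal_ofReal; fun_prop
  -- the double-integral kernel
  set S : Set (ℝ × ℝ) := {p | 0 < p.2 ∧ p.2 ≤ p.1} with hS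
  have hSmeas : MeasurableSet S := by
    apply MeasurableSet.inter
    · exact measurableSet_lt measurable_const measurable_snd
    · exact measurableSet_le measurable_snd measurable_fst
  set F : ℝ → ℝ → ℝ≥0∞ := fun x t => S.indicator (fun p => w p.1 * g p.2) (x, t) with hF
  have hFmeas : Measurable (Function.uncurry F) := by
    have : Function.uncurry F = S.indicator (fun p => w p.1 * g p.2) := by
      funext p; rfl
    rw [this]
    exact ((hwmeas.comp measurable_fst).mul (hgmeas.comp measurable_snd)).indicator hSmeas
  -- Step 1: bound the inner Bochner integral by the lintegral
  have step1 : ∫⁻ x in Ioo (0:ℝ) 1, ENNReal.ofReal (x ^ (α - 1) * ∫ t in Ioc 0 x, f t) ≤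
      ∫⁻ x in Ioo (0:ℝ) 1, w x * ∫⁻ t in Ioc 0 x, g t := by
    apply setLIntegral_mono (hwmeas.mul ?_)
    · intro x hx
      rw [ENNReal.ofReal_mul (Real.rpow_nonneg hx.1.le _)]
      exact mul_le_mul_right (ofReal_int_le13 _ hf) _
    · have hmono : Monotone fun x => ∫⁻ t in Ioc (0:ℝ) x, g t := fun a b hab =>
        lintegral_mono_set (Ioc_subset_Ioc_right hab)
      exact hmono.measurable
  -- Step 2: rewrite as an iterated integral of the kernel and swap
  have claimA : ∫⁻ x in Ioo (0:ℝ) 1, w x * ∫⁻ t in Ioc 0 x, g t =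
      ∫⁻ x in Ioo (0:ℝ) 1, ∫⁻ t in Ioo (0:ℝ) 1, F x t := by
    apply setLIntegral_congr_fun measurableSet_Ioo
    intro x hx; dsimp only
    have h1 : (fun t => F x t) = (Ioc 0 x).indicator (fun t => w x * g t) := by
      funext t
      simp only [hF, Set.indicator, hS, Set.mem_setOf_eq, Set.mem_Ioc]
    rw [h1, lintegral_indicator measurableSet_Ioc,
      Measure.restrict_restrict measurableSet_Ioc]
    have h2 : Ioc 0 x ∩ Ioo 0 1 = Ioc 0 x := by
      apply inter_eq_left.2
      intro t ht
      exact ⟨ht.1, lt_of_le_of_lt ht.2 hx.2⟩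
    rw [h2, lintegral_const_mul _ hgmeas]
  have claimB : ∫⁻ t in Ioo (0:ℝ) 1, ∫⁻ x in Ioo (0:ℝ) 1, F x t =
      ∫⁻ t in Ioo (0:ℝ) 1, g t * ∫⁻ x in Ico t 1, w x := by
    apply setLIntegral_congr_fun measurableSet_Ioo
    intro t ht; dsimp only
    have h1 : (fun x => F x t) = (Ici t).indicator (fun x => w x * g t) := by
      funext x
      simp only [hF, Set.indicator, hS, Set.mem_setOf_eq, Set.mem_Ici]
      by_cases hc : t ≤ x
      · simp [hc, ht.1]
      · simp [hc]
    rw [h1, lintegral_indicator measurableSet_Ici,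
      Measure.restrict_restrict measurableSet_Ici]
    have h2 : Ici t ∩ Ioo 0 1 = Ico t 1 := by
      ext x
      simp only [Set.mem_inter_iff, Set.mem_Ici, Set.mem_Ioo, Set.mem_Ico]
      constructor
      · rintro ⟨h3, _, h5⟩; exact ⟨h3, h5⟩
      · rintro ⟨h3, h4⟩; exact ⟨h3, lt_of_lt_of_le ht.1 h3, h4⟩
    rw [h2, lintegral_mul_const _ hwmeas, mul_comm]
  have swap : ∫⁻ x in Ioo (0:ℝ) 1, ∫⁻ t in Ioo (0:ℝ) 1, F x t =
      ∫⁻ t in Ioo (0:ℝ) 1, ∫⁻ x in Ioo (0:ℝ) 1, F x t :=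
    lintegral_lintegral_swap hFmeas.aemeasurable
  -- Step 3: compute the inner weight integral
  have step3 : ∀ t ∈ Ioo (0:ℝ) 1,
      ∫⁻ x in Ico t 1, w x = ENNReal.ofReal ((t ^ α - 1) / (-α)) := by
    intro t ht
    rw [Measure.restrict_congr_set Ico_ae_eq_Ioc]
    have hInt : IntegrableOn (fun x : ℝ => x ^ (α - 1)) (Ioc t 1) := by
      rw [← intervalIntegrable_iff_integrableOn_Ioc_of_le ht.2.le]
      apply intervalIntegral.intervalIntegrable_rpow
      right
      rw [Set.uIcc_of_le ht.2.le]
      intro h0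
      exact absurd h0.1 (not_le.2 ht.1)
    have hnn : 0 ≤ᵐ[volume.restrict (Ioc t 1)] fun x : ℝ => x ^ (α - 1) :=
      (ae_restrict_iff' measurableSet_Ioc).2
        (ae_of_all _ fun x hx => Real.rpow_nonneg (lt_trans ht.1 hx.1).le _)
    rw [hw, ← ofReal_integral_eq_lintegral_ofReal hInt hnn]
    congr 1
    rw [← intervalIntegral.integral_of_le ht.2.le]
    rw [integral_rpow (Or.inr ⟨by intro h; apply hβ.ne'; linarith [sub_eq_iff_eq_add.1 h],
      by rw [Set.uIcc_of_le ht.2.le]; intro h0; exact absurd h0.1 (not_le.2 ht.1)⟩)]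
    have : α - 1 + 1 = α := by ring
    rw [this, Real.one_rpow]
    rw [div_eq_div_iff (by linarith) (by linarith)]
    ring
  -- Step 4: pointwise bound of the outer integrand
  have step4 : ∫⁻ t in Ioo (0:ℝ) 1, g t * ∫⁻ x in Ico t 1, w x ≤
      ∫⁻ t in Ioo (0:ℝ) 1,
        ENNReal.ofReal (max 1 (-α) / (-α)) * ENNReal.ofReal ((1 - t) * f t * t ^ α) := by
    apply setLIntegral_mono
    · apply Measurable.const_mul
      apply Measurable.ennreal_ofReal
      fun_prop
    · intro t ht
      rw [step3 t ht, hg, ← ENNReal.ofReal_mul (hf t), ← ENNReal.ofReal_mul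
        (div_nonneg (le_trans zero_le_one (le_max_left _ _)) hβ.le)]
      apply ENNReal.ofReal_le_ofReal
      have hk := key_aux13 hα ht.1 ht.2.le
      have := mul_le_mul_of_nonneg_left hk (hf t)
      calc f t * ((t ^ α - 1) / (-α)) ≤
          f t * (max 1 (-α) / (-α) * ((1 - t) * t ^ α)) := this
        _ = max 1 (-α) / (-α) * ((1 - t) * f t * t ^ α) := by ring
  calc ∫⁻ x in Ioo (0:ℝ) 1, ENNReal.ofReal (x ^ (α - 1) * ∫ t in Ioc 0 x, f t)
      ≤ ∫⁻ x in Ioo (0:ℝ) 1, w x * ∫⁻ t in Ioc 0 x, g t := step1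
    _ = ∫⁻ t in Ioo (0:ℝ) 1, g t * ∫⁻ x in Ico t 1, w x := by
        rw [claimA, swap, claimB]
    _ ≤ ∫⁻ t in Ioo (0:ℝ) 1,
          ENNReal.ofReal (max 1 (-α) / (-α)) * ENNReal.ofReal ((1 - t) * f t * t ^ α) := step4
    _ = ENNReal.ofReal (max 1 (-α) / (-α)) *
          ∫⁻ t in Ioo (0:ℝ) 1, ENNReal.ofReal ((1 - t) * f t * t ^ α) :=
        lintegral_const_mul' _ _ ENNReal.ofReal_ne_top
end
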